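/- Let C(k,j) denote the sum of signs over all (k−j, j−1)-unshuffles in S_{k−1}. Then for integers p ≥ q ≥ 0, one has C(2p+1, 2q+1) = binomial(p, q). -/

import Mathlib

open scoped Classical

/-- Sum of the signs of all permutations of `Fin n` that are strictly increasing
on the first `m` positions and on the remaining `n - m` positions.
For `n = k - 1` and `m = k - j` these are the `(k-j, j-1)`-unshuffles. -/
noncomputable def unshuffleSignSum (n m : ℕ) : ℤ :=
  ∑ σ : Equiv.Perm (Fin n),
    if ((∀ i j : Fin n, i < j → (j : ℕ) < m → σ i < σ j) ∧
        (∀ i j : Fin n, i < j → m ≤ (i : ℕ) → σ i < σ j)) then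
      (Equiv.Perm.sign σ : ℤ) else 0

namespace UnshuffleAux

def cond (n m : ℕ) (σ : Equiv.Perm (Fin n)) : Prop :=
  (∀ i j : Fin n, i < j → (j : ℕ) < m → σ i < σ j) ∧
  (∀ i j : Fin n, i < j → m ≤ (i : ℕ) → σ i < σ j)

noncomputable def F (n m : ℕ) (σ : Equiv.Perm (Fin n)) : ℤ :=
  if cond n m σ then (Equiv.Perm.sign σ : ℤ) else 0

lemma unshuffleSignSum_eq (n m : ℕ) :
    unshuffleSignSum n m = ∑ σ : Equiv.Perm (Fin n), F n m σ := by
  unfold unshuffleSignSum F cond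
  congr
  funext σ
  congr

lemma vne {n : ℕ} {j : Fin (n+1)} (h : j ≠ 0) : (j:ℕ) ≠ 0 := by
  intro hh; exact h (Fin.ext (by simp [hh]))

lemma cond_one (n m : ℕ) : cond n m 1 :=
  ⟨fun _ _ h _ => h, fun _ _ h _ => h⟩

lemma eq_one_of_strictMono {n : ℕ} (σ : Equiv.Perm (Fin n)) (h : StrictMono σ) : σ = 1 := by
  let e : Fin n ≃o Fin n := StrictMono.orderIsoOfSurjective σ h σ.surjective
  have he : e = OrderIso.refl (Fin n) := Subsingleton.elim _ _
  ext x
  have hx : σ x = x := by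
    have := congrArg (fun f : Fin n ≃o Fin n => f x) he
    exact this
  simp [hx]

lemma sum_F_of_le {n m : ℕ} (h : n ≤ m) :
    ∑ σ : Equiv.Perm (Fin n), F n m σ = 1 := by
  have key : ∀ σ : Equiv.Perm (Fin n), F n m σ = if σ = 1 then 1 else 0 := by
    intro σ
    unfold F
    by_cases hσ : σ = 1
    · subst hσ; rw [if_pos (cond_one n m), if_pos rfl]; simp
    · rw [if_neg hσ, if_neg]
      intro hc
      exact hσ (eq_one_of_strictMono σ (fun i j hij =>
        hc.1 i j hij (lt_of_lt_of_le j.isLt h)))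
  rw [Finset.sum_congr rfl (fun σ _ => key σ)]
  simp

lemma sum_F_zero (n : ℕ) :
    ∑ σ : Equiv.Perm (Fin n), F n 0 σ = 1 := by
  have key : ∀ σ : Equiv.Perm (Fin n), F n 0 σ = if σ = 1 then 1 else 0 := by
    intro σ
    unfold F
    by_cases hσ : σ = 1
    · subst hσ; rw [if_pos (cond_one n 0), if_pos rfl]; simp
    · rw [if_neg hσ, if_neg]
      intro hc
      exact hσ (eq_one_of_strictMono σ (fun i j hij =>
        hc.2 i j hij (Nat.zero_le _)))
  rw [Finset.sum_congr rfl (fun σ _ => key σ)]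
  simp

noncomputable def E (n : ℕ) (k : Fin (n+1)) (τ : Equiv.Perm (Fin n)) : Equiv.Perm (Fin (n+1)) :=
  Equiv.Perm.decomposeFin.symm (0, τ) * k.cycleRange

lemma E_apply_lt {n : ℕ} (k : Fin (n+1)) (τ : Equiv.Perm (Fin n)) (j : Fin (n+1))
    (hjk : (j:ℕ) < (k:ℕ)) (hjn : (j:ℕ) < n) :
    E n k τ j = (τ ⟨(j:ℕ), hjn⟩).succ := by
  have h1 : j < k := hjk
  have h2 : (j + 1 : Fin (n+1)) = (⟨(j:ℕ), hjn⟩ : Fin n).succ := by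
    have : j < Fin.last n := by
      rw [Fin.lt_def]; simpa using hjn
    ext
    simp [Fin.val_add_one_of_lt this]
  rw [E, Equiv.Perm.mul_apply, Fin.cycleRange_of_lt h1, h2,
    Equiv.Perm.decomposeFin_symm_apply_succ, Equiv.swap_self]
  rfl

lemma E_apply_self {n : ℕ} (k : Fin (n+1)) (τ : Equiv.Perm (Fin n)) :
    E n k τ k = 0 := by
  rw [E, Equiv.Perm.mul_apply, Fin.cycleRange_self,
    Equiv.Perm.decomposeFin_symm_apply_zero]

lemma E_apply_gt {n : ℕ} (k : Fin (n+1)) (τ : Equiv.Perm (Fin n)) (j : Fin (n+1))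
    (hkj : (k:ℕ) < (j:ℕ)) (hj0 : j ≠ 0) :
    E n k τ j = (τ (j.pred hj0)).succ := by
  have h1 : k < j := hkj
  rw [E, Equiv.Perm.mul_apply, Fin.cycleRange_of_gt h1]
  conv_lhs => rw [← Fin.succ_pred j hj0]
  rw [Equiv.Perm.decomposeFin_symm_apply_succ, Equiv.swap_self]
  rfl

lemma E_sign {n : ℕ} (k : Fin (n+1)) (τ : Equiv.Perm (Fin n)) :
    Equiv.Perm.sign (E n k τ) = (-1)^(k:ℕ) * Equiv.Perm.sign τ := by
  simp [E, Fin.sign_cycleRange, mul_comm]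

lemma E_bijective (n : ℕ) :
    Function.Bijective (fun x : Fin (n+1) × Equiv.Perm (Fin n) => E n x.1 x.2) := by
  constructor
  · rintro ⟨k, τ⟩ ⟨k', τ'⟩ hE
    simp only at hE
    have hk : k = k' := by
      have h1 : E n k τ k = 0 := E_apply_self k τ
      have h2 : E n k' τ' k' = 0 := E_apply_self k' τ'
      rw [hE] at h1
      exact (E n k' τ').injective (h1.trans h2.symm)
    subst hk
    have : Equiv.Perm.decomposeFin.symm (0, τ) = Equiv.Perm.decomposeFin.symm (0, τ') := by
      have := congrArg (fun σ => σ * (k.cycleRange)⁻¹) hE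
      simpa [E, mul_assoc] using this
    have := Equiv.Perm.decomposeFin.symm.injective this
    simp only [Prod.mk.injEq] at this
    exact Prod.ext rfl this.2
  · intro σ
    set k : Fin (n+1) := σ⁻¹ 0 with hk
    set g : Equiv.Perm (Fin (n+1)) := σ * (k.cycleRange)⁻¹ with hgdef
    have hg0 : g 0 = 0 := by
      have : (k.cycleRange)⁻¹ 0 = k := by
        rw [Equiv.Perm.inv_eq_iff_eq]
        exact (Fin.cycleRange_self k).symm
      simp [hgdef, this, hk]
    have hg : Equiv.Perm.decomposeFin.symm
        ((Equiv.Perm.decomposeFin g).1, (Equiv.Perm.decomposeFin g).2) = g := by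
      simp only [Prod.mk.eta]
      exact Equiv.Perm.decomposeFin.symm_apply_apply g
    have h1 : (Equiv.Perm.decomposeFin g).1 = 0 := by
      have h2 := congrArg (fun e : Equiv.Perm (Fin (n+1)) => e 0) hg
      simp only [Equiv.Perm.decomposeFin_symm_apply_zero] at h2
      rw [h2, hg0]
    refine ⟨(k, (Equiv.Perm.decomposeFin g).2), ?_⟩
    simp only [E]
    rw [← h1, hg, hgdef]
    group

lemma condA {n m : ℕ} (τ : Equiv.Perm (Fin n)) :
    cond (n+1) (m+1) (E n (0 : Fin (n+1)) τ) ↔ cond n m τ := by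
  have hval : ∀ (j : Fin (n+1)) (hj : j ≠ 0), E n 0 τ j = (τ (j.pred hj)).succ := by
    intro j hj
    exact E_apply_gt 0 τ j (by simpa using Nat.pos_of_ne_zero (vne hj)) hj
  constructor
  · rintro ⟨h1, h2⟩
    constructor
    · intro i j hij hjm
      have hlt := h1 i.succ j.succ (by rwa [Fin.succ_lt_succ_iff])
        (by rw [Fin.val_succ]; omega)
      rwa [hval i.succ (Fin.succ_ne_zero i), hval j.succ (Fin.succ_ne_zero j),
        Fin.pred_succ, Fin.pred_succ, Fin.succ_lt_succ_iff] at hlt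
    · intro i j hij him
      have hlt := h2 i.succ j.succ (by rwa [Fin.succ_lt_succ_iff])
        (by rw [Fin.val_succ]; omega)
      rwa [hval i.succ (Fin.succ_ne_zero i), hval j.succ (Fin.succ_ne_zero j),
        Fin.pred_succ, Fin.pred_succ, Fin.succ_lt_succ_iff] at hlt
  · rintro ⟨h1, h2⟩
    constructor
    · intro i j hij hjm
      have hj : j ≠ 0 := by
        intro hh; subst hh; exact (Fin.not_lt_zero i) hij
      by_cases hi : i = 0
      · subst hi
        rw [E_apply_self 0 τ, hval j hj]
        exact Fin.succ_pos _
      · rw [hval i hi, hval j hj, Fin.succ_lt_succ_iff]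
        have hij' : (i:ℕ) < (j:ℕ) := hij
        have hi0 : (i:ℕ) ≠ 0 := vne hi
        apply h1
        · rw [Fin.lt_def, Fin.coe_pred, Fin.coe_pred]; omega
        · rw [Fin.coe_pred]; omega
    · intro i j hij him
      have hi : i ≠ 0 := by
        intro hh; subst hh; simp at him
      have hj : j ≠ 0 := by
        intro hh; subst hh; exact (Fin.not_lt_zero i) hij
      rw [hval i hi, hval j hj, Fin.succ_lt_succ_iff]
      have hij' : (i:ℕ) < (j:ℕ) := hij
      have hi0 : (i:ℕ) ≠ 0 := vne hi
      apply h2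
      · rw [Fin.lt_def, Fin.coe_pred, Fin.coe_pred]; omega
      · rw [Fin.coe_pred]; omega

lemma condB {n m : ℕ} (h : m + 1 ≤ n) (τ : Equiv.Perm (Fin n)) :
    cond (n+1) (m+1) (E n (⟨m+1, by omega⟩ : Fin (n+1)) τ) ↔ cond n (m+1) τ := by
  set k1 : Fin (n+1) := ⟨m+1, by omega⟩ with hk1
  have hk1v : (k1 : ℕ) = m+1 := rfl
  have hlo : ∀ (j : Fin (n+1)) (hj : (j:ℕ) < m+1),
      E n k1 τ j = (τ ⟨(j:ℕ), by omega⟩).succ := by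
    intro j hj
    exact E_apply_lt k1 τ j (by omega) (by omega)
  have hhi : ∀ (j : Fin (n+1)) (hj0 : j ≠ 0), m+1 < (j:ℕ) →
      E n k1 τ j = (τ (j.pred hj0)).succ := by
    intro j hj0 hj
    exact E_apply_gt k1 τ j (by omega) hj0
  constructor
  · rintro ⟨h1, h2⟩
    constructor
    · intro i j hij hjm
      have hlt := h1 i.castSucc j.castSucc (by rwa [Fin.castSucc_lt_castSucc_iff])
        (by rw [Fin.coe_castSucc]; omega)
      rw [hlo i.castSucc (by rw [Fin.coe_castSucc]; omega),
        hlo j.castSucc (by rw [Fin.coe_castSucc]; omega), Fin.succ_lt_succ_iff] at hlt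
      simpa [Fin.eta] using hlt
    · intro i j hij him
      have hlt := h2 i.succ j.succ (by rwa [Fin.succ_lt_succ_iff])
        (by rw [Fin.val_succ]; omega)
      rwa [hhi i.succ (Fin.succ_ne_zero i) (by rw [Fin.val_succ]; omega),
        hhi j.succ (Fin.succ_ne_zero j) (by rw [Fin.val_succ]; omega),
        Fin.pred_succ, Fin.pred_succ, Fin.succ_lt_succ_iff] at hlt
  · rintro ⟨h1, h2⟩
    constructor
    · intro i j hij hjm
      have hij' : (i:ℕ) < (j:ℕ) := hij
      rw [hlo i (by omega), hlo j hjm, Fin.succ_lt_succ_iff]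
      exact h1 _ _ (by rw [Fin.mk_lt_mk]; omega) (by simpa using hjm)
    · intro i j hij him
      have hij' : (i:ℕ) < (j:ℕ) := hij
      have hj0 : j ≠ 0 := by
        intro hh; subst hh; simp at hij'
      by_cases hik : (i:ℕ) = m+1
      · have : i = k1 := Fin.ext (by rw [hk1v, hik])
        subst this
        rw [E_apply_self k1 τ, hhi j hj0 (by omega)]
        exact Fin.succ_pos _
      · have hi0 : i ≠ 0 := by
          intro hh; subst hh; simp at him
        rw [hhi i hi0 (by omega), hhi j hj0 (by omega), Fin.succ_lt_succ_iff]
        exact h2 _ _ (by rw [Fin.lt_def, Fin.coe_pred, Fin.coe_pred]; omega)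
          (by rw [Fin.coe_pred]; omega)

lemma inner_sum {n m : ℕ} (h : m + 1 ≤ n) (τ : Equiv.Perm (Fin n)) :
    ∑ k : Fin (n+1), F (n+1) (m+1) (E n k τ)
      = F n m τ + (-1)^(m+1) * F n (m+1) τ := by
  set k1 : Fin (n+1) := ⟨m+1, by omega⟩ with hk1
  have hk1v : (k1 : ℕ) = m+1 := rfl
  have h01 : (0 : Fin (n+1)) ≠ k1 := by
    intro hh
    have := congrArg (fun x : Fin (n+1) => (x:ℕ)) hh
    simp [hk1] at this
  have hvanish : ∀ k : Fin (n+1), k ∉ ({0, k1} : Finset (Fin (n+1))) →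
      F (n+1) (m+1) (E n k τ) = 0 := by
    intro k hk
    simp only [Finset.mem_insert, Finset.mem_singleton, not_or] at hk
    obtain ⟨hk0, hk1'⟩ := hk
    unfold F
    rw [if_neg]
    rintro ⟨h1, h2⟩
    have hkv : (k:ℕ) ≠ m+1 := by
      intro hv; exact hk1' (Fin.ext hv)
    have hkpos : 0 < (k:ℕ) := Nat.pos_of_ne_zero (vne hk0)
    rcases lt_or_gt_of_ne hkv with hlt | hgt
    · have hx := h1 0 k (Fin.pos_of_ne_zero hk0) (by omega)
      rw [E_apply_self] at hx
      exact (Fin.not_lt_zero _) hx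
    · have hx := h2 k1 k (by rw [Fin.lt_def]; exact hgt) (le_of_eq hk1v.symm)
      rw [E_apply_self] at hx
      exact (Fin.not_lt_zero _) hx
  have hsum : ∑ k : Fin (n+1), F (n+1) (m+1) (E n k τ)
      = ∑ k ∈ ({0, k1} : Finset (Fin (n+1))), F (n+1) (m+1) (E n k τ) :=
    (Finset.sum_subset (Finset.subset_univ _) (fun x _ hx => hvanish x hx)).symm
  rw [hsum, Finset.sum_pair h01]
  have e0 : F (n+1) (m+1) (E n 0 τ) = F n m τ := by
    unfold F
    by_cases hc : cond n m τ
    · rw [if_pos ((condA τ).mpr hc), if_pos hc, E_sign]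
      simp
    · rw [if_neg (fun hh => hc ((condA τ).mp hh)), if_neg hc]
  have e1 : F (n+1) (m+1) (E n k1 τ) = (-1)^(m+1) * F n (m+1) τ := by
    unfold F
    by_cases hc : cond n (m+1) τ
    · rw [if_pos ((condB h τ).mpr hc), if_pos hc, E_sign]
      push_cast
      norm_num
      rw [hk1v]
    · rw [if_neg (fun hh => hc ((condB h τ).mp hh)), if_neg hc]
      ring
  rw [e0, e1]

lemma rec1 (n m : ℕ) (h : m + 1 ≤ n) :
    (∑ σ : Equiv.Perm (Fin (n+1)), F (n+1) (m+1) σ)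
      = (∑ τ : Equiv.Perm (Fin n), F n m τ)
        + (-1)^(m+1) * (∑ τ : Equiv.Perm (Fin n), F n (m+1) τ) := by
  rw [← Fintype.sum_bijective _ (E_bijective n) _ _ (fun x => rfl)]
  rw [Fintype.sum_prod_type, Finset.sum_comm]
  rw [Finset.sum_congr rfl (fun τ _ => inner_sum h τ)]
  rw [Finset.sum_add_distrib, Finset.mul_sum]

lemma rec2 (n m : ℕ) (h : m + 2 ≤ n) :
    (∑ σ : Equiv.Perm (Fin (n+2)), F (n+2) (m+2) σ)
      = (∑ τ : Equiv.Perm (Fin n), F n m τ)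
        + (∑ τ : Equiv.Perm (Fin n), F n (m+2) τ) := by
  have h1 := rec1 (n+1) (m+1) (by omega)
  have h2 := rec1 n m (by omega)
  have h3 := rec1 n (m+1) (by omega)
  rw [show m+1+1 = m+2 from rfl] at h1 h3
  rw [h1, h2, h3]
  rcases Nat.even_or_odd (m+1) with he | ho
  · have e1 : ((-1:ℤ))^(m+1) = 1 := he.neg_one_pow
    have e2 : ((-1:ℤ))^(m+2) = -1 := (he.add_one).neg_one_pow
    rw [e1, e2]; ring
  · have e1 : ((-1:ℤ))^(m+1) = -1 := ho.neg_one_pow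
    have e2 : ((-1:ℤ))^(m+2) = 1 := (ho.add_one).neg_one_pow
    rw [e1, e2]; ring

lemma key : ∀ p q : ℕ, q ≤ p →
    (∑ σ : Equiv.Perm (Fin (2*p)), F (2*p) (2*p - 2*q) σ) = (p.choose q : ℤ) := by
  intro p
  induction p with
  | zero =>
    intro q hq
    have : q = 0 := by omega
    subst this
    simpa using sum_F_zero 0
  | succ p ih =>
    intro q hq
    by_cases hq0 : q = 0
    · subst hq0
      rw [show 2*(p+1) - 2*0 = 2*(p+1) from by omega, sum_F_of_le (le_refl _)]
      simp
    by_cases hqp : q = p + 1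
    · subst hqp
      rw [show 2*(p+1) - 2*(p+1) = 0 from by omega, sum_F_zero]
      simp
    have hq1 : 1 ≤ q := by omega
    have hqp' : q ≤ p := by omega
    rw [show 2*(p+1) = (2*p)+2 from by ring,
      show (2*p)+2 - 2*q = (2*p - 2*q) + 2 from by omega]
    rw [rec2 (2*p) (2*p - 2*q) (by omega)]
    rw [ih q hqp']
    rw [show (2*p - 2*q) + 2 = 2*p - 2*(q-1) from by omega]
    rw [ih (q-1) (by omega)]
    have hc : (p+1).choose q = p.choose (q-1) + p.choose q := by
      have h2 := Nat.choose_succ_succ p (q-1)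
      rw [show (q-1).succ = q from by omega] at h2
      exact h2
    rw [hc]
    push_cast
    ring

end UnshuffleAux

/-- `C(k, j)` for `k = 2p + 1`, `j = 2q + 1`: the signed count equals `C(p, q)`. -/
theorem unshuffle_count_odd_odd (p q : ℕ) (h : q ≤ p) :
    unshuffleSignSum (2 * p) (2 * p - 2 * q) = (p.choose q : ℤ) := by
  rw [UnshuffleAux.unshuffleSignSum_eq]
  exact UnshuffleAux.key p q h
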